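/- Let ℓ ∈ ℕ and let m be a multi-set of segments of integers all of length ℓ. Let Δ be minimal in m with respect to the order ≤_b, and write m = Σ_{n=0}^N a_n {ν^n Δ} with a_0 ≥ 1 and a_n ≥ 0. If m is of Speh type then Σ_{n=0}^N (−1)^{N−n} a_n = 0. -/

import Mathlib

/-- A segment of integers `[a,b] = {a, a+1, ..., b}` with `a ≤ b`. -/
structure Seg where
  a : ℤ
  b : ℤ
  le : a ≤ b

noncomputable instance : DecidableEq Seg := Classical.decEq _

/-- The shift `ν[a,b] = [a+1,b+1]`. -/
def Seg.nu (Δ : Seg) : Seg := ⟨Δ.a + 1, Δ.b + 1, by have := Δ.le; omega⟩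

/-- `Δ ≺ Δ'` : `Δ` precedes `Δ'`. -/
def Seg.prec (Δ Δ' : Seg) : Prop := Δ.a < Δ'.a ∧ Δ.b < Δ'.b ∧ Δ'.a - 1 ≤ Δ.b

/-- A multi-set of segments is of Speh type if `m = n + νn` for some multi-set `n`. -/
def SpehType (m : Multiset Seg) : Prop := ∃ n : Multiset Seg, m = n + n.map Seg.nu

/-- The order `≤_b` on segments: by beginning, then by end. -/
def Seg.leB (Δ Δ' : Seg) : Prop := Δ.a < Δ'.a ∨ (Δ.a = Δ'.a ∧ Δ.b ≤ Δ'.b)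

lemma Seg.ext' {Δ Δ' : Seg} (ha : Δ.a = Δ'.a) (hb : Δ.b = Δ'.b) : Δ = Δ' := by
  cases Δ; cases Δ'; simp_all

lemma nuIter_a (Δ : Seg) (k : ℕ) : (Seg.nu^[k] Δ).a = Δ.a + k := by
  induction k with
  | zero => simp
  | succ k ih =>
    rw [Function.iterate_succ_apply']
    simp [Seg.nu, ih]; push_cast; ring

lemma nuIter_b (Δ : Seg) (k : ℕ) : (Seg.nu^[k] Δ).b = Δ.b + k := by
  induction k with
  | zero => simp
  | succ k ih =>
    rw [Function.iterate_succ_apply']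
    simp [Seg.nu, ih]; push_cast; ring

lemma nu_inj : Function.Injective Seg.nu := by
  intro x y h
  have ha : x.a + 1 = y.a + 1 := congrArg Seg.a h
  have hb : x.b + 1 = y.b + 1 := congrArg Seg.b h
  exact Seg.ext' (by omega) (by omega)

lemma nuIter_eq_iff (Δ : Seg) (j k : ℕ) : Seg.nu^[j] Δ = Seg.nu^[k] Δ ↔ j = k := by
  constructor
  · intro h
    have := congrArg Seg.a h
    rw [nuIter_a, nuIter_a] at this
    omega
  · rintro rfl; rfl

lemma telescope (c : ℕ → ℤ) (N : ℕ) :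
    ∑ n ∈ Finset.range (N + 1), (-1 : ℤ) ^ (N - n) * (c (n + 1) + c n)
      = c (N + 1) + (-1) ^ N * c 0 := by
  induction N with
  | zero => simp
  | succ N ih =>
    rw [Finset.sum_range_succ]
    have hc : ∀ n ∈ Finset.range (N + 1),
        (-1 : ℤ) ^ (N + 1 - n) * (c (n + 1) + c n)
          = (-1) * ((-1) ^ (N - n) * (c (n + 1) + c n)) := by
      intro n hn
      have hn' : n ≤ N := by simpa using Nat.lt_succ_iff.mp (Finset.mem_range.mp hn)
      have : N + 1 - n = (N - n) + 1 := by omega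
      rw [this, pow_succ]; ring
    rw [Finset.sum_congr rfl hc, ← Finset.mul_sum, ih]
    simp [pow_succ]; ring

/-- if all segments of `m` have length `ℓ`, `Δ` is `≤_b`-minimal in `m`, and
`m = Σ_{n=0}^N a_n {ν^n Δ}` with `a_0 ≥ 1`, then Speh type implies
`Σ_{n=0}^N (−1)^{N−n} a_n = 0`. -/
theorem speh_alternating_sum (ℓ : ℕ) (m : Multiset Seg) (Δ : Seg)
    (hlen : ∀ Δ' ∈ m, Δ'.b - Δ'.a + 1 = (ℓ : ℤ))
    (hmem : Δ ∈ m) (hmin : ∀ Δ' ∈ m, Δ.leB Δ')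
    (N : ℕ) (a : ℕ → ℕ) (ha0 : 1 ≤ a 0)
    (hsum : m = ∑ n ∈ Finset.range (N + 1), a n • ({Seg.nu^[n] Δ} : Multiset Seg))
    (hSpeh : SpehType m) :
    ∑ n ∈ Finset.range (N + 1), (-1 : ℤ) ^ (N - n) * (a n : ℤ) = 0 := by
  classical
  obtain ⟨nn, hnn⟩ := hSpeh
  set b : ℕ → ℕ := fun k => nn.count (Seg.nu^[k] Δ) with hbdef
  -- count of ν^[k] Δ in m
  have hcount : ∀ k, m.count (Seg.nu^[k] Δ) = if k ≤ N then a k else 0 := by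
    intro k
    rw [hsum, Multiset.count_sum']
    have hterm : ∀ n, (a n • ({Seg.nu^[n] Δ} : Multiset Seg)).count (Seg.nu^[k] Δ)
        = if k = n then a n else 0 := by
      intro n
      rw [Multiset.count_nsmul, Multiset.count_singleton]
      by_cases h : k = n
      · subst h; simp
      · have : Seg.nu^[k] Δ ≠ Seg.nu^[n] Δ := fun hc => h ((nuIter_eq_iff Δ k n).mp hc)
        simp [this, h]
    rw [Finset.sum_congr rfl (fun n _ => hterm n)]
    by_cases h : k ≤ N
    · rw [Finset.sum_ite_eq (Finset.range (N + 1)) k a]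
      simp [Nat.lt_succ_iff, h]
    · rw [Finset.sum_ite_eq (Finset.range (N + 1)) k a]
      simp [Nat.lt_succ_iff, h]
  have hmcount : ∀ x, m.count x = nn.count x + (nn.map Seg.nu).count x := by
    intro x; rw [hnn, Multiset.count_add]
  have hmap : ∀ k, (nn.map Seg.nu).count (Seg.nu^[k + 1] Δ) = b k := by
    intro k
    rw [Function.iterate_succ_apply']
    exact Multiset.count_map_eq_count' _ _ nu_inj _
  -- count of Δ in the shifted part is 0 by minimality
  have hΔmap : (nn.map Seg.nu).count Δ = 0 := by
    rw [Multiset.count_eq_zero]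
    intro h
    obtain ⟨y, hy, hyx⟩ := Multiset.mem_map.mp h
    have hym : y ∈ m := by rw [hnn]; exact Multiset.mem_add.mpr (Or.inl hy)
    have hle := hmin y hym
    have hya : y.a + 1 = Δ.a := congrArg Seg.a hyx
    rcases hle with h1 | ⟨h1, _⟩ <;> omega
  have h0 : a 0 = b 0 := by
    have h1 := hcount 0
    have h2 := hmcount (Seg.nu^[0] Δ)
    simp only [Function.iterate_zero_apply] at h1 h2
    simp only [Nat.zero_le, if_true] at h1
    rw [hΔmap] at h2
    have hb0 : b 0 = nn.count Δ := by simp [hbdef]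
    omega
  have hstep : ∀ k, (if k + 1 ≤ N then a (k + 1) else 0) = b (k + 1) + b k := by
    intro k
    have h1 := hcount (k + 1)
    have h2 := hmcount (Seg.nu^[k + 1] Δ)
    rw [hmap k] at h2
    have hbk : b (k + 1) = nn.count (Seg.nu^[k + 1] Δ) := rfl
    omega
  have hbN : b N = 0 := by
    have := hstep N
    simp at this
    omega
  -- telescoping
  set c : ℕ → ℤ := fun k => Nat.rec 0 (fun n _ => (b n : ℤ)) k with hcdef
  have hc0 : c 0 = 0 := rfl
  have hcs : ∀ n, c (n + 1) = (b n : ℤ) := fun n => rfl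
  have hterm : ∀ n ∈ Finset.range (N + 1), (-1 : ℤ) ^ (N - n) * (a n : ℤ)
      = (-1 : ℤ) ^ (N - n) * (c (n + 1) + c n) := by
    intro n hn
    have hn' : n ≤ N := Nat.lt_succ_iff.mp (Finset.mem_range.mp hn)
    congr 1
    cases n with
    | zero => rw [hcs, hc0, h0]; simp
    | succ k =>
      have := hstep k
      have hk1 : k + 1 ≤ N := hn'
      rw [if_pos hk1] at this
      rw [hcs, hcs, this]
      push_cast; ring
  rw [Finset.sum_congr rfl hterm, telescope c N, hcs, hbN, hc0]
  simp
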